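/- Let q = 2^m with m ≥ 2, and consider the [q+1, 3, q−2] code C generated by the columns (1, α, α^2)^T for α ∈ F_q^* together with (1,0,0)^T and (0,1,1)^T. The number of codewords of weight 3 in the dual code C⊥ is exactly q(q−1)/2. -/
import Mathlib

/-- Generator matrix with columns `(1, α, α²)ᵀ` for `α` ranging over the nonzero
elements of `F` (enumerated by `α`), followed by the columns `(1,0,0)ᵀ` and `(0,1,1)ᵀ`. -/
def genMatrix {F : Type*} [Field F] [Fintype F]
    (α : Fin (Fintype.card F - 1) → F) :
    Matrix (Fin 3) (Fin (Fintype.card F + 1)) F :=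
  fun i j =>
    if h : (j : ℕ) < Fintype.card F - 1 then (α ⟨j, h⟩) ^ (i : ℕ)
    else if (j : ℕ) = Fintype.card F - 1 then (if i = 0 then 1 else 0)
    else (if i = 0 then 0 else 1)

namespace Stmt15Aux

section CharTwo

variable {F : Type*} [Field F]

lemma char2_add_eq_zero (h2 : (2:F) = 0) {x y : F} (h : x + y = 0) : x = y := by
  have : y + y = 0 := by linear_combination y * h2
  linear_combination h - this

lemma char2_one_add (h2 : (2:F) = 0) (a : F) : 1 + (1 + a) = a := by
  linear_combination h2

lemma char2_add_ne_zero (h2 : (2:F) = 0) {a b : F} (hab : a ≠ b) : a + b ≠ 0 :=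
  fun h => hab (char2_add_eq_zero h2 h)

lemma sq_eq_self {a : F} (ha : a ≠ 0) (h : a^2 = a) : a = 1 := by
  have : a * a = a * 1 := by linear_combination h
  exact mul_left_cancel₀ ha this

lemma ne_one_add_self (a : F) : a ≠ 1 + a := fun h => zero_ne_one (α := F) (by linear_combination h)

lemma vand2 (h2 : (2:F) = 0) {a b x y : F} (ha : a ≠ 0) (hx : x ≠ 0)
    (hab : a ≠ b) (e1 : x*a + y*b = 0) (e2 : x*a^2 + y*b^2 = 0) : False := by
  have h1 : x*a = y*b := char2_add_eq_zero h2 e1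
  have h2' : x*a^2 = y*b^2 := char2_add_eq_zero h2 e2
  have key : (x*a)*a = (x*a)*b := by
    calc (x*a)*a = x*a^2 := by ring
    _ = y*b^2 := h2'
    _ = (y*b)*b := by ring
    _ = (x*a)*b := by rw [h1]
  exact hab (mul_left_cancel₀ (mul_ne_zero hx ha) key)

lemma vand3 (h2 : (2:F) = 0) {a b c x y z : F} (hx : x ≠ 0)
    (hab : a ≠ b) (hac : a ≠ c) (hbc : b ≠ c)
    (e0 : x + y + z = 0) (e1 : x*a + y*b + z*c = 0) (e2 : x*a^2 + y*b^2 + z*c^2 = 0) : False := by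
  have hz : z = x + y := (char2_add_eq_zero h2 (by linear_combination e0)).symm
  have f1 : x*(a+c) + y*(b+c) = 0 := by linear_combination e1 - c * hz
  have f2 : x*(a+c)^2 + y*(b+c)^2 = 0 := by
    linear_combination e2 - c^2*hz + (x*a*c + y*b*c)*h2
  have g1 : x*(a+c) = y*(b+c) := char2_add_eq_zero h2 f1
  have g2 : x*(a+c)^2 = y*(b+c)^2 := char2_add_eq_zero h2 f2
  have hac' : a + c ≠ 0 := char2_add_ne_zero h2 hac
  have key : (x*(a+c))*(a+c) = (x*(a+c))*(b+c) := by
    calc (x*(a+c))*(a+c) = x*(a+c)^2 := by ring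
    _ = y*(b+c)^2 := g2
    _ = (y*(b+c))*(b+c) := by ring
    _ = (x*(a+c))*(b+c) := by rw [g1]
  have := mul_left_cancel₀ (mul_ne_zero hx hac') key
  exact hab (by linear_combination this)

end CharTwo

section Indices

variable {M : Type*} [AddCommMonoid M]

lemma sum_split {c : ℕ} (hc : 1 ≤ c) (g : Fin (c+1) → M) :
    ∑ j, g j = (∑ j : Fin (c-1), g ⟨j, by omega⟩) + g ⟨c-1, by omega⟩ + g ⟨c, by omega⟩ := by
  have h : c + 1 = (c-1) + 1 + 1 := by omega
  have eP : finCongr h.symm (Fin.castSucc (Fin.last (c-1))) = (⟨c-1, by omega⟩ : Fin (c+1)) := by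
    ext; simp
  have eQ : finCongr h.symm (Fin.last (c-1+1)) = (⟨c, by omega⟩ : Fin (c+1)) := by
    ext; simp
  have eE : ∀ j : Fin (c-1), finCongr h.symm (j.castSucc.castSucc) = (⟨j, by omega⟩ : Fin (c+1)) := by
    intro j; ext; simp
  rw [Fintype.sum_equiv (finCongr h) g (fun j => g (finCongr h.symm j)) (by intro x; simp),
    Fin.sum_univ_castSucc, Fin.sum_univ_castSucc, eP, eQ]
  simp only [eE]

omit [AddCommMonoid M] in
lemma ext3 {c : ℕ} (hc : 1 ≤ c) (v w : Fin (c+1) → M)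
    (h1 : ∀ j : Fin (c-1), v ⟨j, by omega⟩ = w ⟨j, by omega⟩)
    (hP : v ⟨c-1, by omega⟩ = w ⟨c-1, by omega⟩)
    (hQ : v ⟨c, by omega⟩ = w ⟨c, by omega⟩) : v = w := by
  funext j
  rcases lt_trichotomy (j:ℕ) (c-1) with h|h|h
  · exact h1 ⟨j, h⟩
  · have : j = ⟨c-1, by omega⟩ := Fin.ext h
    rw [this]; exact hP
  · have : j = ⟨c, by omega⟩ := Fin.ext (by have h2 := j.isLt; show (j:ℕ) = c; omega)
    rw [this]; exact hQ

end Indices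

variable {F : Type*} [Field F] [Fintype F] [DecidableEq F]

lemma gen_emb (α : Fin (Fintype.card F - 1) → F) (i : Fin 3) (j : Fin (Fintype.card F - 1))
    (h : (j:ℕ) < Fintype.card F + 1) :
    genMatrix α i ⟨j, h⟩ = α j ^ (i:ℕ) := by
  simp [genMatrix, j.isLt]

lemma gen_P (α : Fin (Fintype.card F - 1) → F) (i : Fin 3)
    (h : Fintype.card F - 1 < Fintype.card F + 1) :
    genMatrix α i ⟨Fintype.card F - 1, h⟩ = if i = 0 then 1 else 0 := by
  simp [genMatrix]

lemma gen_Q (hc : 4 ≤ Fintype.card F) (α : Fin (Fintype.card F - 1) → F) (i : Fin 3)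
    (h : Fintype.card F < Fintype.card F + 1) :
    genMatrix α i ⟨Fintype.card F, h⟩ = if i = 0 then 0 else 1 := by
  have h1 : ¬ (Fintype.card F < Fintype.card F - 1) := by omega
  have h2 : ¬ (Fintype.card F = Fintype.card F - 1) := by omega
  simp [genMatrix, h1, h2]

lemma dual_iff (α : Fin (Fintype.card F - 1) → F) (v : Fin (Fintype.card F + 1) → F) :
    (∀ c ∈ (Submodule.span F (Set.range (genMatrix α)) :
          Submodule F (Fin (Fintype.card F + 1) → F)), ∑ j, v j * c j = 0) ↔
      ∀ i : Fin 3, ∑ j, v j * genMatrix α i j = 0 := by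
  constructor
  · intro h i; exact h _ (Submodule.subset_span ⟨i, rfl⟩)
  · intro h cc hcc
    induction hcc using Submodule.span_induction with
    | mem x hx => obtain ⟨i, rfl⟩ := hx; exact h i
    | zero => simp
    | add x y _ _ hx hy =>
        simp only [Pi.add_apply, mul_add, Finset.sum_add_distrib, hx, hy, add_zero]
    | smul a x _ hx =>
        simp only [Pi.smul_apply, smul_eq_mul, mul_left_comm, ← Finset.mul_sum, hx, mul_zero]

/-- The parametrizing map: `fmap α a x` is the putative dual codeword attached to
the pair `{a, 1+a}` and the scalar `x`. -/
def fmap (α : Fin (Fintype.card F - 1) → F) (a x : F) : Fin (Fintype.card F + 1) → F :=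
  fun j =>
    if h : (j : ℕ) < Fintype.card F - 1 then
      (if α ⟨j, h⟩ = a ∨ α ⟨j, h⟩ = 1 + a then x else 0)
    else if (j : ℕ) = Fintype.card F - 1 then (if a = 0 ∨ a = 1 then x else 0)
    else x

variable (α : Fin (Fintype.card F - 1) → F)

lemma fmap_emb (a x : F) (j : Fin (Fintype.card F - 1)) (h : (j:ℕ) < Fintype.card F + 1) :
    fmap α a x ⟨j, h⟩ = if α j = a ∨ α j = 1 + a then x else 0 := by
  simp [fmap, j.isLt]

lemma fmap_P (a x : F) (h : Fintype.card F - 1 < Fintype.card F + 1) :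
    fmap α a x ⟨Fintype.card F - 1, h⟩ = if a = 0 ∨ a = 1 then x else 0 := by
  simp [fmap]

lemma fmap_Q (hc : 4 ≤ Fintype.card F) (a x : F) (h : Fintype.card F < Fintype.card F + 1) :
    fmap α a x ⟨Fintype.card F, h⟩ = x := by
  have h1 : ¬ (Fintype.card F < Fintype.card F - 1) := by omega
  have h2 : ¬ (Fintype.card F = Fintype.card F - 1) := by omega
  simp [fmap, h1, h2]

lemma hsurj (hinj : Function.Injective α) (h0 : ∀ i, α i ≠ 0)
    (hc : 4 ≤ Fintype.card F) (b : F) (hb : b ≠ 0) : ∃ j, α j = b := by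
  have hsub : Finset.univ.image α ⊆ Finset.univ.erase 0 := by
    intro y hy
    obtain ⟨j, _, rfl⟩ := Finset.mem_image.mp hy
    exact Finset.mem_erase.mpr ⟨h0 j, Finset.mem_univ _⟩
  have hcard : (Finset.univ.image α).card = Fintype.card F - 1 := by
    rw [Finset.card_image_of_injective _ hinj]; simp
  have hcard2 : (Finset.univ.erase (0:F)).card = Fintype.card F - 1 := by
    rw [Finset.card_erase_of_mem (Finset.mem_univ _)]; simp
  have heq : Finset.univ.image α = Finset.univ.erase 0 :=
    Finset.eq_of_subset_of_card_le hsub (by omega)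
  have : b ∈ Finset.univ.image α := by
    rw [heq]; exact Finset.mem_erase.mpr ⟨hb, Finset.mem_univ _⟩
  obtain ⟨j, _, hj⟩ := Finset.mem_image.mp this
  exact ⟨j, hj⟩

section Sums

variable {M : Type*} [AddCommMonoid M]

/-- Sum of a single α-indicator with constant value. -/
lemma ind_sum_const (hinj : Function.Injective α) (h0 : ∀ i, α i ≠ 0)
    (hc : 4 ≤ Fintype.card F) (b : F) (t : M) :
    ∑ j : Fin (Fintype.card F - 1), (if α j = b then t else 0) =
      if b = 0 then 0 else t := by
  by_cases hb : b = 0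
  · rw [if_pos hb]
    apply Finset.sum_eq_zero
    intro j _
    rw [if_neg (by rw [hb]; exact h0 j)]
  · obtain ⟨j₀, hj₀⟩ := hsurj α hinj h0 hc b hb
    rw [if_neg hb]
    have point : ∀ j : Fin (Fintype.card F - 1),
        (if α j = b then t else 0) = if j = j₀ then t else 0 := by
      intro j
      by_cases h : j = j₀
      · subst h; rw [if_pos hj₀, if_pos rfl]
      · rw [if_neg (fun he => h (hinj (he.trans hj₀.symm))), if_neg h]
    rw [Finset.sum_congr rfl (fun j _ => point j)]
    simp

end Sums

lemma f_sum (hinj : Function.Injective α) (h0 : ∀ i, α i ≠ 0) (h2 : (2:F) = 0)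
    (hc : 4 ≤ Fintype.card F) (a x : F) (n : ℕ) :
    ∑ j : Fin (Fintype.card F - 1), (if α j = a ∨ α j = 1 + a then x else 0) * α j ^ n =
      (if a = 0 then 0 else x * a ^ n) + (if 1 + a = 0 then 0 else x * (1 + a) ^ n) := by
  have point : ∀ j : Fin (Fintype.card F - 1),
      (if α j = a ∨ α j = 1 + a then x else 0) * α j ^ n =
        (if α j = a then x * a ^ n else 0) + (if α j = 1 + a then x * (1 + a) ^ n else 0) := by
    intro j
    by_cases ha : α j = a <;> by_cases hb : α j = 1 + a
    · exact absurd (ha.symm.trans hb) (ne_one_add_self a)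
    · simp [ha, hb, ne_one_add_self a]
    · have hne' : (1:F) + a ≠ a := fun h => ne_one_add_self a h.symm
      simp [ha, hb, hne']
    · simp [ha, hb]
  rw [Finset.sum_congr rfl (fun j _ => point j), Finset.sum_add_distrib,
    ind_sum_const α hinj h0 hc a (x * a ^ n),
    ind_sum_const α hinj h0 hc (1+a) (x * (1+a) ^ n)]

lemma f_cnt (hinj : Function.Injective α) (h0 : ∀ i, α i ≠ 0)
    (hc : 4 ≤ Fintype.card F) (a x : F) (hx : x ≠ 0) :
    ∑ j : Fin (Fintype.card F - 1),
        (if (if α j = a ∨ α j = 1 + a then x else 0) ≠ 0 then 1 else 0 : ℕ) =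
      (if a = 0 then 0 else 1) + (if 1 + a = 0 then 0 else 1) := by
  have point : ∀ j : Fin (Fintype.card F - 1),
      (if (if α j = a ∨ α j = 1 + a then x else 0) ≠ 0 then 1 else 0 : ℕ) =
        (if α j = a then 1 else 0) + (if α j = 1 + a then 1 else 0) := by
    intro j
    by_cases ha : α j = a <;> by_cases hb : α j = 1 + a
    · exact absurd (ha.symm.trans hb) (ne_one_add_self a)
    · simp [ha, hb, hx]
    · simp [ha, hb, hx]
    · simp [ha, hb]
  rw [Finset.sum_congr rfl (fun j _ => point j), Finset.sum_add_distrib,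
    ind_sum_const α hinj h0 hc a (1:ℕ), ind_sum_const α hinj h0 hc (1+a) (1:ℕ)]

lemma one_add_eq_zero_iff (h2 : (2:F) = 0) (a : F) : 1 + a = 0 ↔ a = 1 :=
  ⟨fun h => by linear_combination h - h2, fun h => by rw [h]; linear_combination h2⟩

lemma fmap_mem (hinj : Function.Injective α) (h0 : ∀ i, α i ≠ 0) (h2 : (2:F) = 0)
    (hc : 4 ≤ Fintype.card F) (a x : F) (hx : x ≠ 0) :
    (∀ i : Fin 3, ∑ j, fmap α a x j * genMatrix α i j = 0) ∧ hammingNorm (fmap α a x) = 3 := by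
  have hc1 : (1:ℕ) ≤ Fintype.card F := by omega
  constructor
  · intro i
    rw [sum_split hc1 (fun j => fmap α a x j * genMatrix α i j)]
    simp only [fmap_emb, gen_emb, fmap_P, gen_P, fmap_Q α hc, gen_Q hc]
    rw [f_sum α hinj h0 h2 hc a x (i:ℕ)]
    by_cases ha0 : a = 0
    · fin_cases i <;> simp [ha0] <;> linear_combination x * h2
    · by_cases ha1 : a = 1
      · have h11 : (1:F) + 1 = 0 := by linear_combination h2
        fin_cases i <;> simp [ha1, h11] <;> linear_combination x * h2
      · have h1a : (1:F) + a ≠ 0 := fun h => ha1 (by linear_combination h - h2)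
        have hor : ¬ (a = 0 ∨ a = 1) := by rintro (h|h); exacts [ha0 h, ha1 h]
        fin_cases i <;> simp [ha0, ha1, h1a, hor] <;>
          first
          | linear_combination x * h2
          | linear_combination (x*a + x) * h2
          | linear_combination (x*a^2 + x*a + x) * h2
  · have hdef : hammingNorm (fmap α a x) =
        ∑ j : Fin (Fintype.card F + 1), if fmap α a x j ≠ 0 then 1 else 0 :=
      Finset.card_filter _ _
    rw [hdef, sum_split hc1 (fun j => if fmap α a x j ≠ 0 then 1 else 0)]
    simp only [fmap_emb, fmap_P, fmap_Q α hc]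
    rw [f_cnt α hinj h0 hc a x hx]
    have hPite : (if (if a = 0 ∨ a = 1 then x else 0) ≠ 0 then 1 else 0 : ℕ) =
        if a = 0 ∨ a = 1 then 1 else 0 := by
      by_cases h : a = 0 ∨ a = 1 <;> simp [h, hx]
    rw [hPite, if_pos hx]
    by_cases ha0 : a = 0
    · simp [ha0]
    · by_cases ha1 : a = 1
      · have h10 : (1:F) + 1 = 0 := by linear_combination h2
        simp [ha0, ha1, h10]
      · have h10 : (1:F) + a ≠ 0 := fun h => ha1 (by linear_combination h - h2)
        have hor : ¬ (a = 0 ∨ a = 1) := by rintro (h|h); exacts [ha0 h, ha1 h]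
        simp [ha0, ha1, h10, hor]

lemma fmap_flip (h2 : (2:F) = 0) (hc : 4 ≤ Fintype.card F) (a x : F) :
    fmap α a x = fmap α (1+a) x := by
  have hc1 : (1:ℕ) ≤ Fintype.card F := by omega
  apply ext3 hc1
  · intro j
    rw [fmap_emb, fmap_emb, char2_one_add h2 a]
    exact if_congr or_comm rfl rfl
  · rw [fmap_P, fmap_P]
    refine if_congr ?_ rfl rfl
    constructor
    · rintro (rfl|rfl)
      · right; norm_num
      · left; linear_combination h2
    · rintro (h|h)
      · right; linear_combination h - h2
      · left; linear_combination h
  · rw [fmap_Q α hc, fmap_Q α hc]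

lemma fmap_inj (hinj : Function.Injective α) (h0 : ∀ i, α i ≠ 0) (h2 : (2:F) = 0)
    (hc : 4 ≤ Fintype.card F) (a x a' x' : F)
    (hx : x ≠ 0) (hx' : x' ≠ 0) (heq : fmap α a' x' = fmap α a x) :
    x' = x ∧ (a' = a ∨ a' = 1 + a) := by
  have hQ := congrFun heq ⟨Fintype.card F, by omega⟩
  rw [fmap_Q α hc, fmap_Q α hc] at hQ
  refine ⟨hQ, ?_⟩
  by_cases ha'0 : a' = 0
  · by_cases ha0 : a = 0
    · left; rw [ha'0, ha0]
    · obtain ⟨j, hj⟩ := hsurj α hinj h0 hc a ha0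
      have hcoord := congrFun heq ⟨(j:ℕ), by omega⟩
      rw [fmap_emb, fmap_emb, hj] at hcoord
      rw [if_pos (Or.inl rfl)] at hcoord
      by_cases haa : a = a' ∨ a = 1 + a'
      · rcases haa with h | h
        · exact absurd (h.trans ha'0) ha0
        · right
          rw [ha'0] at h ⊢
          rw [h]
          linear_combination -h2
      · rw [if_neg haa] at hcoord
        exact absurd hcoord.symm hx
  · obtain ⟨j, hj⟩ := hsurj α hinj h0 hc a' ha'0
    have hcoord := congrFun heq ⟨(j:ℕ), by omega⟩
    rw [fmap_emb, fmap_emb, hj] at hcoord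
    rw [if_pos (Or.inl rfl)] at hcoord
    by_cases hC : a' = a ∨ a' = 1 + a
    · exact hC
    · rw [if_neg hC] at hcoord
      exact absurd hcoord hx'

lemma fmap_surj (hinj : Function.Injective α) (h0 : ∀ i, α i ≠ 0) (h2 : (2:F) = 0)
    (hc : 4 ≤ Fintype.card F)
    (v : Fin (Fintype.card F + 1) → F)
    (hcondv : ∀ i : Fin 3, ∑ j, v j * genMatrix α i j = 0)
    (hnorm : hammingNorm v = 3) :
    ∃ a x : F, x ≠ 0 ∧ v = fmap α a x := by
  have hc1 : (1:ℕ) ≤ Fintype.card F := by omega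
  have hlt : ∀ j : Fin (Fintype.card F - 1), (j:ℕ) < Fintype.card F + 1 := fun j => by omega
  have hPlt : Fintype.card F - 1 < Fintype.card F + 1 := by omega
  have hQlt : Fintype.card F < Fintype.card F + 1 := by omega
  have hne10 : ((1:Fin 3) = 0) = False := by simp
  have hne20 : ((2:Fin 3) = 0) = False := by simp
  -- the three dual equations
  have e0 : (∑ j : Fin (Fintype.card F - 1), v ⟨(j:ℕ), hlt j⟩) +
      v ⟨Fintype.card F - 1, hPlt⟩ = 0 := by
    have h := hcondv 0
    rw [sum_split hc1 (fun j => v j * genMatrix α 0 j)] at h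
    simpa [gen_emb, gen_P, gen_Q hc] using h
  have e1 : (∑ j : Fin (Fintype.card F - 1), v ⟨(j:ℕ), hlt j⟩ * α j) +
      v ⟨Fintype.card F, hQlt⟩ = 0 := by
    have h := hcondv 1
    rw [sum_split hc1 (fun j => v j * genMatrix α 1 j)] at h
    simpa [gen_emb, gen_P, gen_Q hc, hne10] using h
  have e2 : (∑ j : Fin (Fintype.card F - 1), v ⟨(j:ℕ), hlt j⟩ * α j ^ 2) +
      v ⟨Fintype.card F, hQlt⟩ = 0 := by
    have h := hcondv 2
    rw [sum_split hc1 (fun j => v j * genMatrix α 2 j)] at h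
    simpa [gen_emb, gen_P, gen_Q hc, hne20, show (((2:Fin 3)):ℕ) = 2 from rfl] using h
  -- the weight equation
  set sset : Finset (Fin (Fintype.card F - 1)) :=
    Finset.univ.filter (fun j => v ⟨(j:ℕ), hlt j⟩ ≠ 0) with hsset
  have hcardsum : sset.card =
      ∑ j : Fin (Fintype.card F - 1), if v ⟨(j:ℕ), hlt j⟩ ≠ 0 then 1 else 0 :=
    Finset.card_filter _ _
  have hN : sset.card + (if v ⟨Fintype.card F - 1, hPlt⟩ ≠ 0 then 1 else 0) +
      (if v ⟨Fintype.card F, hQlt⟩ ≠ 0 then 1 else 0) = 3 := by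
    rw [hcardsum]
    have h : hammingNorm v = ∑ j : Fin (Fintype.card F + 1), if v j ≠ 0 then 1 else 0 :=
      Finset.card_filter _ _
    rw [h, sum_split hc1 (fun j => if v j ≠ 0 then 1 else 0)] at hnorm
    exact hnorm
  -- restriction of sums to the support
  have hres : ∀ g : Fin (Fintype.card F - 1) → F,
      (∀ j : Fin (Fintype.card F - 1), v ⟨(j:ℕ), hlt j⟩ = 0 → g j = 0) →
      (∑ j, g j) = ∑ j ∈ sset, g j := by
    intro g hg
    exact (Finset.sum_filter_of_ne (p := fun (j : Fin (Fintype.card F - 1)) => v ⟨(j:ℕ), hlt j⟩ ≠ 0)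
      (fun x _ hx hv0 => hx (hg x hv0))).symm
  by_cases hp : v ⟨Fintype.card F - 1, hPlt⟩ = 0 <;>
    by_cases ht : v ⟨Fintype.card F, hQlt⟩ = 0
  · -- p = 0, t = 0 : support must have size 3, Vandermonde contradiction
    exfalso
    simp only [hp, ht, ne_eq, not_true_eq_false, if_false, add_zero] at hN
    obtain ⟨j₁, j₂, j₃, h12, h13, h23, hj⟩ := Finset.card_eq_three.mp hN
    have hu1 : v ⟨(j₁:ℕ), hlt j₁⟩ ≠ 0 := by
      have : j₁ ∈ sset := by rw [hj]; simp
      exact (Finset.mem_filter.mp this).2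
    have hsum3 : ∀ g : Fin (Fintype.card F - 1) → F,
        (∀ j : Fin (Fintype.card F - 1), v ⟨(j:ℕ), hlt j⟩ = 0 → g j = 0) →
        (∑ j, g j) = g j₁ + (g j₂ + g j₃) := by
      intro g hg
      rw [hres g hg, hj, Finset.sum_insert (by simp [h12, h13]), Finset.sum_pair h23]
    rw [hsum3 (fun j => v ⟨(j:ℕ), hlt j⟩) (fun _ h => h)] at e0
    rw [hsum3 (fun j => v ⟨(j:ℕ), hlt j⟩ * α j) (fun j h => by simp [h])] at e1
    rw [hsum3 (fun j => v ⟨(j:ℕ), hlt j⟩ * α j ^ 2) (fun j h => by simp [h])] at e2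
    have E0 : v ⟨(j₁:ℕ), hlt j₁⟩ + v ⟨(j₂:ℕ), hlt j₂⟩ + v ⟨(j₃:ℕ), hlt j₃⟩ = 0 := by
      linear_combination e0 - hp
    have E1 : v ⟨(j₁:ℕ), hlt j₁⟩ * α j₁ + v ⟨(j₂:ℕ), hlt j₂⟩ * α j₂ +
        v ⟨(j₃:ℕ), hlt j₃⟩ * α j₃ = 0 := by
      linear_combination e1 - ht
    have E2 : v ⟨(j₁:ℕ), hlt j₁⟩ * α j₁ ^ 2 + v ⟨(j₂:ℕ), hlt j₂⟩ * α j₂ ^ 2 +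
        v ⟨(j₃:ℕ), hlt j₃⟩ * α j₃ ^ 2 = 0 := by
      linear_combination e2 - ht
    exact vand3 h2 hu1 (hinj.ne h12) (hinj.ne h13) (hinj.ne h23) E0 E1 E2
  · -- p = 0, t ≠ 0 : support of size 2, family C
    simp only [hp, ht, ne_eq, not_true_eq_false, not_false_eq_true, if_false, if_true,
      add_zero] at hN
    have hcard2 : sset.card = 2 := by omega
    obtain ⟨j₁, j₂, hne12, hj⟩ := Finset.card_eq_two.mp hcard2
    have hu1 : v ⟨(j₁:ℕ), hlt j₁⟩ ≠ 0 := by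
      have : j₁ ∈ sset := by rw [hj]; simp
      exact (Finset.mem_filter.mp this).2
    have hu2 : v ⟨(j₂:ℕ), hlt j₂⟩ ≠ 0 := by
      have : j₂ ∈ sset := by rw [hj]; simp
      exact (Finset.mem_filter.mp this).2
    have hoff : ∀ j, j ≠ j₁ → j ≠ j₂ → v ⟨(j:ℕ), hlt j⟩ = 0 := by
      intro j hj1 hj2
      by_contra h
      have : j ∈ sset := Finset.mem_filter.mpr ⟨Finset.mem_univ _, h⟩
      rw [hj] at this
      simp only [Finset.mem_insert, Finset.mem_singleton] at this
      tauto
    have hsum2 : ∀ g : Fin (Fintype.card F - 1) → F,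
        (∀ j : Fin (Fintype.card F - 1), v ⟨(j:ℕ), hlt j⟩ = 0 → g j = 0) →
        (∑ j, g j) = g j₁ + g j₂ := by
      intro g hg
      rw [hres g hg, hj, Finset.sum_pair hne12]
    rw [hsum2 (fun j => v ⟨(j:ℕ), hlt j⟩) (fun _ h => h)] at e0
    rw [hsum2 (fun j => v ⟨(j:ℕ), hlt j⟩ * α j) (fun j h => by simp [h])] at e1
    rw [hsum2 (fun j => v ⟨(j:ℕ), hlt j⟩ * α j ^ 2) (fun j h => by simp [h])] at e2
    have hxy : v ⟨(j₁:ℕ), hlt j₁⟩ = v ⟨(j₂:ℕ), hlt j₂⟩ :=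
      char2_add_eq_zero h2 (by linear_combination e0 - hp)
    have ht1 : v ⟨(j₁:ℕ), hlt j₁⟩ * α j₁ + v ⟨(j₂:ℕ), hlt j₂⟩ * α j₂ =
        v ⟨Fintype.card F, hQlt⟩ := char2_add_eq_zero h2 (by linear_combination e1)
    have ht2 : v ⟨(j₁:ℕ), hlt j₁⟩ * α j₁ ^ 2 + v ⟨(j₂:ℕ), hlt j₂⟩ * α j₂ ^ 2 =
        v ⟨Fintype.card F, hQlt⟩ := char2_add_eq_zero h2 (by linear_combination e2)
    have hab : α j₁ ≠ α j₂ := hinj.ne hne12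
    have hs : α j₁ + α j₂ ≠ 0 := char2_add_ne_zero h2 hab
    have key : v ⟨(j₁:ℕ), hlt j₁⟩ * (α j₁ + α j₂) = v ⟨Fintype.card F, hQlt⟩ := by
      linear_combination ht1 + α j₂ * hxy
    have key2 : v ⟨(j₁:ℕ), hlt j₁⟩ * (α j₁ + α j₂) ^ 2 = v ⟨Fintype.card F, hQlt⟩ := by
      linear_combination ht2 + α j₂ ^ 2 * hxy + v ⟨(j₁:ℕ), hlt j₁⟩ * α j₁ * α j₂ * h2
    have hsum1 : α j₁ + α j₂ = 1 := by
      have hkey : (v ⟨(j₁:ℕ), hlt j₁⟩ * (α j₁ + α j₂)) * (α j₁ + α j₂) =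
          (v ⟨(j₁:ℕ), hlt j₁⟩ * (α j₁ + α j₂)) * 1 := by
        linear_combination key2 - key
      exact mul_left_cancel₀ (mul_ne_zero hu1 hs) hkey
    have hb : α j₂ = 1 + α j₁ := by linear_combination hsum1 - α j₁ * h2
    have ha0 : α j₁ ≠ 0 := h0 j₁
    have ha1 : α j₁ ≠ 1 := fun h => h0 j₂ (by rw [hb, h]; linear_combination h2)
    refine ⟨α j₁, v ⟨(j₁:ℕ), hlt j₁⟩, hu1, ?_⟩
    apply ext3 hc1
    · intro j
      rw [fmap_emb]
      by_cases hj1 : j = j₁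
      · subst hj1; rw [if_pos (Or.inl rfl)]
      · by_cases hj2 : j = j₂
        · subst hj2; rw [if_pos (Or.inr hb)]; exact hxy.symm
        · rw [if_neg (by
            rintro (h | h)
            · exact hj1 (hinj h)
            · exact hj2 (hinj (h.trans hb.symm)))]
          exact hoff j hj1 hj2
    · rw [fmap_P, if_neg (by rintro (h|h); exacts [ha0 h, ha1 h])]
      exact hp
    · rw [fmap_Q α hc]
      rw [← key, hsum1, mul_one]
  · -- p ≠ 0, t = 0 : support of size 2, Vandermonde contradiction
    exfalso
    simp only [hp, ht, ne_eq, not_true_eq_false, not_false_eq_true, if_false, if_true,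
      add_zero] at hN
    have hcard2 : sset.card = 2 := by omega
    obtain ⟨j₁, j₂, hne12, hj⟩ := Finset.card_eq_two.mp hcard2
    have hu1 : v ⟨(j₁:ℕ), hlt j₁⟩ ≠ 0 := by
      have : j₁ ∈ sset := by rw [hj]; simp
      exact (Finset.mem_filter.mp this).2
    have hsum2 : ∀ g : Fin (Fintype.card F - 1) → F,
        (∀ j : Fin (Fintype.card F - 1), v ⟨(j:ℕ), hlt j⟩ = 0 → g j = 0) →
        (∑ j, g j) = g j₁ + g j₂ := by
      intro g hg
      rw [hres g hg, hj, Finset.sum_pair hne12]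
    rw [hsum2 (fun j => v ⟨(j:ℕ), hlt j⟩ * α j) (fun j h => by simp [h])] at e1
    rw [hsum2 (fun j => v ⟨(j:ℕ), hlt j⟩ * α j ^ 2) (fun j h => by simp [h])] at e2
    have E1 : v ⟨(j₁:ℕ), hlt j₁⟩ * α j₁ + v ⟨(j₂:ℕ), hlt j₂⟩ * α j₂ = 0 := by
      linear_combination e1 - ht
    have E2 : v ⟨(j₁:ℕ), hlt j₁⟩ * α j₁ ^ 2 + v ⟨(j₂:ℕ), hlt j₂⟩ * α j₂ ^ 2 = 0 := by
      linear_combination e2 - ht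
    exact vand2 h2 (h0 j₁) hu1 (hinj.ne hne12) E1 E2
  · -- p ≠ 0, t ≠ 0 : support of size 1, family D
    simp only [hp, ht, ne_eq, not_false_eq_true, if_true] at hN
    have hcard1 : sset.card = 1 := by omega
    obtain ⟨j₀, hj⟩ := Finset.card_eq_one.mp hcard1
    have hu0 : v ⟨(j₀:ℕ), hlt j₀⟩ ≠ 0 := by
      have : j₀ ∈ sset := by rw [hj]; simp
      exact (Finset.mem_filter.mp this).2
    have hoff : ∀ j, j ≠ j₀ → v ⟨(j:ℕ), hlt j⟩ = 0 := by
      intro j hjj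
      by_contra h
      have : j ∈ sset := Finset.mem_filter.mpr ⟨Finset.mem_univ _, h⟩
      rw [hj, Finset.mem_singleton] at this
      exact hjj this
    have hsum1 : ∀ g : Fin (Fintype.card F - 1) → F,
        (∀ j : Fin (Fintype.card F - 1), v ⟨(j:ℕ), hlt j⟩ = 0 → g j = 0) →
        (∑ j, g j) = g j₀ := by
      intro g hg
      rw [hres g hg, hj, Finset.sum_singleton]
    rw [hsum1 (fun j => v ⟨(j:ℕ), hlt j⟩) (fun _ h => h)] at e0
    rw [hsum1 (fun j => v ⟨(j:ℕ), hlt j⟩ * α j) (fun j h => by simp [h])] at e1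
    rw [hsum1 (fun j => v ⟨(j:ℕ), hlt j⟩ * α j ^ 2) (fun j h => by simp [h])] at e2
    have hpp : v ⟨(j₀:ℕ), hlt j₀⟩ = v ⟨Fintype.card F - 1, hPlt⟩ :=
      char2_add_eq_zero h2 (by linear_combination e0)
    have ht1 : v ⟨(j₀:ℕ), hlt j₀⟩ * α j₀ = v ⟨Fintype.card F, hQlt⟩ :=
      char2_add_eq_zero h2 (by linear_combination e1)
    have ht2 : v ⟨(j₀:ℕ), hlt j₀⟩ * α j₀ ^ 2 = v ⟨Fintype.card F, hQlt⟩ :=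
      char2_add_eq_zero h2 (by linear_combination e2)
    have hα : α j₀ = 1 := by
      have hq : α j₀ ^ 2 = α j₀ := by
        have := ht2.trans ht1.symm
        calc α j₀ ^ 2 = α j₀ * α j₀ := sq (α j₀)
        _ = α j₀ := mul_left_cancel₀ hu0 (by linear_combination this)
      exact sq_eq_self (h0 j₀) hq
    refine ⟨1, v ⟨(j₀:ℕ), hlt j₀⟩, hu0, ?_⟩
    apply ext3 hc1
    · intro j
      rw [fmap_emb]
      by_cases hjj : j = j₀
      · subst hjj; rw [if_pos (Or.inl hα)]
      · rw [if_neg (by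
          rintro (h | h)
          · exact hjj (hinj (h.trans hα.symm))
          · exact h0 j (by rw [h]; linear_combination h2))]
        exact hoff j hjj
    · rw [fmap_P, if_pos (Or.inr rfl)]
      exact hpp.symm
    · rw [fmap_Q α hc]
      rw [← ht1, hα, mul_one]

end Stmt15Aux

open Stmt15Aux in
theorem stmt_15 {F : Type*} [Field F] [Fintype F] [DecidableEq F] (m : ℕ) (hm : 2 ≤ m)
    (hcard : Fintype.card F = 2 ^ m)
    (α : Fin (Fintype.card F - 1) → F) (hinj : Function.Injective α)
    (h0 : ∀ i, α i ≠ 0) :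
    Set.ncard {v : Fin (Fintype.card F + 1) → F |
        (∀ c ∈ (Submodule.span F (Set.range (genMatrix α)) :
          Submodule F (Fin (Fintype.card F + 1) → F)), ∑ j, v j * c j = 0) ∧
        hammingNorm v = 3} = 2 ^ m * (2 ^ m - 1) / 2 := by
  classical
  have hc : 4 ≤ Fintype.card F := by
    rw [hcard]
    calc 4 = 2^2 := by norm_num
    _ ≤ 2^m := Nat.pow_le_pow_right (by norm_num) hm
  have h2 : (2:F) = 0 := by
    have hq : ((Fintype.card F : ℕ) : F) = 0 := FiniteField.cast_card_eq_zero F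
    rw [hcard] at hq
    push_cast at hq
    exact pow_eq_zero_iff (by omega) |>.mp hq
  set T : Finset (Fin (Fintype.card F + 1) → F) :=
    Finset.univ.filter (fun v => (∀ i : Fin 3, ∑ j, v j * genMatrix α i j = 0) ∧
      hammingNorm v = 3) with hT
  have hset : {v : Fin (Fintype.card F + 1) → F |
      (∀ c ∈ (Submodule.span F (Set.range (genMatrix α)) :
        Submodule F (Fin (Fintype.card F + 1) → F)), ∑ j, v j * c j = 0) ∧
      hammingNorm v = 3} = ↑T := by
    ext v
    simp only [hT, Set.mem_setOf_eq, Finset.coe_filter, Finset.mem_univ, true_and,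
      Set.mem_setOf_eq, dual_iff α v]
  rw [hset, Set.ncard_coe_finset]
  set A : Finset (F × F) := Finset.univ ×ˢ Finset.univ.filter (· ≠ (0:F)) with hA
  have hmaps : ∀ p ∈ A, fmap α p.1 p.2 ∈ T := by
    rintro ⟨a, x⟩ hp
    have hx : x ≠ 0 := by
      simp only [hA, Finset.mem_product, Finset.mem_filter] at hp
      exact hp.2.2
    have := fmap_mem α hinj h0 h2 hc a x hx
    simp only [hT, Finset.mem_filter, Finset.mem_univ, true_and]
    exact this
  have hfib : ∀ v ∈ T, (A.filter (fun p => fmap α p.1 p.2 = v)).card = 2 := by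
    intro v hv
    simp only [hT, Finset.mem_filter, Finset.mem_univ, true_and] at hv
    obtain ⟨a, x, hx, rfl⟩ := fmap_surj α hinj h0 h2 hc v hv.1 hv.2
    have hne : a ≠ 1 + a := ne_one_add_self a
    have hfil : A.filter (fun p => fmap α p.1 p.2 = fmap α a x) = {(a, x), (1+a, x)} := by
      ext ⟨a', x'⟩
      simp only [Finset.mem_filter, hA, Finset.mem_product, Finset.mem_univ, true_and,
        Finset.mem_insert, Finset.mem_singleton, Prod.mk.injEq]
      constructor
      · rintro ⟨hx', heq⟩
        rcases fmap_inj α hinj h0 h2 hc a x a' x' hx hx' heq with ⟨hxx, h | h⟩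
        · left; exact ⟨h, hxx⟩
        · right; exact ⟨h, hxx⟩
      · rintro (⟨rfl, rfl⟩ | ⟨rfl, rfl⟩)
        · exact ⟨hx, rfl⟩
        · exact ⟨hx, (fmap_flip α h2 hc _ _).symm⟩
    rw [hfil, Finset.card_insert_of_notMem (by simp [hne]), Finset.card_singleton]
  have hcount : A.card = T.card * 2 := by
    rw [Finset.card_eq_sum_card_fiberwise hmaps]
    rw [Finset.sum_congr rfl hfib, Finset.sum_const, smul_eq_mul]
  have hAcard : A.card = Fintype.card F * (Fintype.card F - 1) := by
    have h1 : (Finset.univ.filter (· ≠ (0:F))).card = Fintype.card F - 1 := by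
      rw [Finset.filter_ne', Finset.card_erase_of_mem (Finset.mem_univ _), Finset.card_univ]
    rw [hA, Finset.card_product, Finset.card_univ, h1]
  have hcount2 : Fintype.card F * (Fintype.card F - 1) = T.card * 2 := by
    rw [← hAcard]; exact hcount
  rw [← hcard, hcount2]
  omega
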